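/- In a right-angled Artin group A_Γ with standard generating set, κ(g) = 0 if g is central, and κ(g) < 0 if g is not central. -/

import Mathlib

open Filter Topology

section WL
variable {G : Type*} [Group G]

/-- Word length of `g` with respect to a generating set `S`. -/
noncomputable def wl (S : Set G) (g : G) : ℕ :=
  sInf {n | ∃ l : List G, (∀ x ∈ l, x ∈ S) ∧ l.length = n ∧ l.prod = g}

/-- Average word length of conjugates of `g` by elements of `S`. -/
noncomputable def Av (S : Finset G) (g : G) : ℝ :=
  (∑ a ∈ S, (wl (S : Set G) (a⁻¹ * g * a) : ℝ)) / S.card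

/-- Medium-scale Ricci curvature `κ(g) = (|g| - Av(g))/|g|`. -/
noncomputable def curv (S : Finset G) (g : G) : ℝ :=
  ((wl (S : Set G) g : ℝ) - Av S g) / (wl (S : Set G) g)

end WL


open scoped commutatorElement in
/-- Commutator relators of a right-angled Artin group on the graph `Γ`. -/
def raagRels {V : Type*} (Γ : SimpleGraph V) : Set (FreeGroup V) :=
  {w | ∃ u v : V, Γ.Adj u v ∧ w = ⁅FreeGroup.of u, FreeGroup.of v⁆}

/-- The right-angled Artin group on the graph `Γ`. -/
abbrev RAAG {V : Type*} (Γ : SimpleGraph V) : Type _ :=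
  PresentedGroup (raagRels Γ)

/-- The standard symmetric generating set `V(Γ)^±` of the RAAG. -/
noncomputable def raagS {V : Type*} [Fintype V] (Γ : SimpleGraph V) :
    Finset (RAAG Γ) := by
  classical
  exact Finset.univ.image (fun v : V => (PresentedGroup.of v : RAAG Γ)) ∪
    Finset.univ.image (fun v : V => (PresentedGroup.of v : RAAG Γ)⁻¹)


namespace RaagNF

variable {V : Type*} (Γ : SimpleGraph V)

/-- A letter: a vertex with a sign. -/
abbrev Ltr (V : Type*) := V × Bool

/-- Inverse letter. -/
def linv (l : Ltr V) : Ltr V := (l.1, !l.2)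

@[simp] lemma linv_linv (l : Ltr V) : linv (linv l) = l := by
  cases l; simp [linv]

@[simp] lemma linv_fst (l : Ltr V) : (linv l).1 = l.1 := rfl

lemma linv_ne (l : Ltr V) : linv l ≠ l := by
  cases l with
  | mk v b => simp [linv]

/-- Commuting letters: distinct adjacent vertices. -/
def com (l m : Ltr V) : Prop := Γ.Adj l.1 m.1

lemma com_symm {l m : Ltr V} (h : com Γ l m) : com Γ m l := (Γ.adj_symm h : _)

lemma com_ne {l m : Ltr V} (h : com Γ l m) : l.1 ≠ m.1 := Γ.ne_of_adj h

/-- One swap of two adjacent commuting letters. -/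
inductive SwapStep : List (Ltr V) → List (Ltr V) → Prop
  | mk (x y : List (Ltr V)) (a b : Ltr V) (h : com Γ a b) :
      SwapStep (x ++ a :: b :: y) (x ++ b :: a :: y)

/-- Trace equivalence: reflexive-transitive closure of swaps. -/
def Teq : List (Ltr V) → List (Ltr V) → Prop := Relation.ReflTransGen (SwapStep Γ)

lemma SwapStep.symm' {w u : List (Ltr V)} (h : SwapStep Γ w u) : SwapStep Γ u w := by
  cases h with
  | mk x y a b hc => exact SwapStep.mk x y b a (com_symm Γ hc)

lemma Teq.refl (w : List (Ltr V)) : Teq Γ w w := Relation.ReflTransGen.refl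

lemma Teq.trans {w u v : List (Ltr V)} (h1 : Teq Γ w u) (h2 : Teq Γ u v) : Teq Γ w v :=
  Relation.ReflTransGen.trans h1 h2

lemma Teq.symm {w u : List (Ltr V)} (h : Teq Γ w u) : Teq Γ u w := by
  induction h with
  | refl => exact Teq.refl Γ _
  | tail _ hstep ih => exact Teq.trans Γ (Relation.ReflTransGen.single hstep.symm') ih

lemma Teq.single {w u : List (Ltr V)} (h : SwapStep Γ w u) : Teq Γ w u :=
  Relation.ReflTransGen.single h

lemma SwapStep.append_left {w u : List (Ltr V)} (x : List (Ltr V)) (h : SwapStep Γ w u) :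
    SwapStep Γ (x ++ w) (x ++ u) := by
  cases h with
  | mk x' y a b hc =>
    rw [← List.append_assoc, ← List.append_assoc]
    exact SwapStep.mk (x ++ x') y a b hc

lemma SwapStep.append_right {w u : List (Ltr V)} (h : SwapStep Γ w u) (z : List (Ltr V)) :
    SwapStep Γ (w ++ z) (u ++ z) := by
  cases h with
  | mk x' y a b hc =>
    simp only [List.append_assoc, List.cons_append]
    exact SwapStep.mk x' (y ++ z) a b hc

lemma Teq.append_left {w u : List (Ltr V)} (x : List (Ltr V)) (h : Teq Γ w u) :
    Teq Γ (x ++ w) (x ++ u) := by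
  induction h with
  | refl => exact Teq.refl Γ _
  | tail _ hstep ih => exact Teq.trans Γ ih (Teq.single Γ (hstep.append_left Γ x))

lemma Teq.append_right {w u : List (Ltr V)} (h : Teq Γ w u) (z : List (Ltr V)) :
    Teq Γ (w ++ z) (u ++ z) := by
  induction h with
  | refl => exact Teq.refl Γ _
  | tail _ hstep ih => exact Teq.trans Γ ih (Teq.single Γ (hstep.append_right Γ z))

lemma Teq.cons {w u : List (Ltr V)} (l : Ltr V) (h : Teq Γ w u) :
    Teq Γ (l :: w) (l :: u) := Teq.append_left Γ [l] h

lemma Teq.length_eq {w u : List (Ltr V)} (h : Teq Γ w u) : w.length = u.length := by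
  induction h with
  | refl => rfl
  | tail _ hstep ih => cases hstep with
    | mk x y a b hc => simpa using ih

/-- Shuffle a letter to the front past commuting letters. -/
lemma Teq.shuffle (l : Ltr V) (y z : List (Ltr V)) (hy : ∀ m ∈ y, com Γ m l) :
    Teq Γ (y ++ l :: z) (l :: (y ++ z)) := by
  induction y with
  | nil => exact Teq.refl Γ _
  | cons m y ih =>
    have h1 : Teq Γ (m :: (y ++ l :: z)) (m :: (l :: (y ++ z))) :=
      Teq.cons Γ m (ih (fun m hm => hy m (List.mem_cons_of_mem _ hm)))
    refine Teq.trans Γ h1 (Teq.single Γ ?_)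
    exact SwapStep.mk [] (y ++ z) m l (hy m (List.mem_cons_self))

open Classical in
noncomputable def pr (a b : V) (w : List (Ltr V)) : List (Ltr V) :=
  w.filter (fun l => decide (l.1 = a ∨ l.1 = b))

open Classical in
lemma pr_cons (a b : V) (l : Ltr V) (w : List (Ltr V)) :
    pr a b (l :: w) = if l.1 = a ∨ l.1 = b then l :: pr a b w else pr a b w := by
  by_cases h : l.1 = a ∨ l.1 = b <;> simp [pr, h]

lemma pr_cons_of (a b : V) {l : Ltr V} (h : l.1 = a ∨ l.1 = b) (w : List (Ltr V)) :
    pr a b (l :: w) = l :: pr a b w := by rw [pr_cons]; simp [h]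

lemma pr_cons_of_not (a b : V) {l : Ltr V} (h : ¬(l.1 = a ∨ l.1 = b)) (w : List (Ltr V)) :
    pr a b (l :: w) = pr a b w := by rw [pr_cons]; simp [h]

open Classical in
lemma pr_append (a b : V) (w u : List (Ltr V)) :
    pr a b (w ++ u) = pr a b w ++ pr a b u := by simp [pr]

/-- A swapped pair has at most one letter surviving projection to a non-adjacent pair. -/
lemma swap_not_both {a b : V} (hab : ¬ Γ.Adj a b) {c d : Ltr V} (hcd : com Γ c d) :
    ¬((c.1 = a ∨ c.1 = b) ∧ (d.1 = a ∨ d.1 = b)) := by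
  rintro ⟨hc | hc, hd | hd⟩
  · exact Γ.ne_of_adj hcd (hc.trans hd.symm)
  · exact hab (hc ▸ hd ▸ hcd)
  · exact hab (Γ.adj_symm (hc ▸ hd ▸ hcd))
  · exact Γ.ne_of_adj hcd (hc.trans hd.symm)

/-- Forward projection lemma. -/
lemma pr_teq {w u : List (Ltr V)} (h : Teq Γ w u) (a b : V) (hab : ¬ Γ.Adj a b) :
    pr a b w = pr a b u := by
  induction h with
  | refl => rfl
  | tail _ hstep ih =>
    refine ih.trans ?_
    cases hstep with
    | mk x y c d hcd =>
      have hnb := swap_not_both Γ hab hcd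
      by_cases hc : c.1 = a ∨ c.1 = b <;> by_cases hd : d.1 = a ∨ d.1 = b
      · exact absurd ⟨hc, hd⟩ hnb
      · simp only [pr_append, pr_cons_of _ _ hc, pr_cons_of_not _ _ hd]
      · simp only [pr_append, pr_cons_of _ _ hd, pr_cons_of_not _ _ hc]
      · simp only [pr_append, pr_cons_of_not _ _ hc, pr_cons_of_not _ _ hd]

/-- Extraction lemma: if along every "pair with `l.1`" projection `w'` starts with `l`,
then `l` can be extracted from the front of `w'`. -/
lemma extract (l : Ltr V) :
    ∀ w' : List (Ltr V), (∀ c : V, ¬ Γ.Adj c l.1 →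
      ∃ t, pr c l.1 w' = l :: t) →
    ∃ y z, w' = y ++ l :: z ∧ ∀ m ∈ y, com Γ m l := by
  intro w'
  induction w' with
  | nil =>
    intro h
    obtain ⟨t, ht⟩ := h l.1 (Γ.irrefl)
    exact absurd ht (by simp [pr])
  | cons m w₁ ih =>
    intro h
    by_cases hml : m = l
    · exact ⟨[], w₁, by simp [hml], by simp⟩
    · have hm1 : m.1 ≠ l.1 := by
        intro hv
        obtain ⟨t, ht⟩ := h l.1 (Γ.irrefl)
        rw [pr_cons_of _ _ (Or.inl hv) ] at ht
        exact hml (List.head_eq_of_cons_eq ht)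
      have hadj : Γ.Adj m.1 l.1 := by
        by_contra hna
        obtain ⟨t, ht⟩ := h m.1 hna
        rw [pr_cons_of _ _ (Or.inl rfl)] at ht
        exact hml (List.head_eq_of_cons_eq ht)
      obtain ⟨y, z, hw, hy⟩ := ih (fun c hc => by
        have hmc : ¬(m.1 = c ∨ m.1 = l.1) := by
          rintro (hc' | hc')
          · exact hc (hc' ▸ hadj)
          · exact hm1 hc'
        obtain ⟨t, ht⟩ := h c hc
        rw [pr_cons_of_not _ _ hmc] at ht
        exact ⟨t, ht⟩)
      refine ⟨m :: y, z, by simp [hw], ?_⟩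
      intro m' hm'
      rcases List.mem_cons.mp hm' with h' | h'
      · exact h' ▸ hadj
      · exact hy m' h'

/-- Backward projection lemma. -/
lemma teq_of_pr : ∀ (w w' : List (Ltr V)),
    (∀ a b : V, ¬ Γ.Adj a b → pr a b w = pr a b w') → Teq Γ w w' := by
  intro w
  induction w with
  | nil =>
    intro w' h
    cases w' with
    | nil => exact Teq.refl Γ _
    | cons m w₁ =>
      have := h m.1 m.1 (Γ.irrefl)
      rw [pr_cons_of _ _ (Or.inl rfl)] at this
      exact absurd this (by simp [pr])
  | cons l w₀ ih =>
    intro w' h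
    obtain ⟨y, z, rfl, hy⟩ := extract Γ l w' (fun c hc =>
      ⟨pr c l.1 w₀, by
        rw [← h c l.1 hc, pr_cons_of _ _ (Or.inr rfl)]⟩)
    have hpry : ∀ a b : V, ¬ Γ.Adj a b → (l.1 = a ∨ l.1 = b) → pr a b y = [] := by
      intro a b hab hl
      simp only [pr, List.filter_eq_nil_iff, decide_eq_true_eq]
      intro m hm
      have hadj : Γ.Adj m.1 l.1 := hy m hm
      rintro (h1 | h1) <;> rcases hl with h2 | h2
      · exact Γ.irrefl ((h1.trans h2.symm) ▸ hadj)
      · exact hab (by rw [← h1, ← h2]; exact hadj)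
      · exact hab (by rw [← h2, ← h1]; exact Γ.adj_symm hadj)
      · exact Γ.irrefl ((h1.trans h2.symm) ▸ hadj)
    have hmid : ∀ a b : V, ¬ Γ.Adj a b → pr a b w₀ = pr a b (y ++ z) := by
      intro a b hab
      have hh := h a b hab
      by_cases hl : l.1 = a ∨ l.1 = b
      · rw [pr_cons_of _ _ hl, pr_append, hpry a b hab hl, pr_cons_of _ _ hl] at hh
        rw [pr_append, hpry a b hab hl]
        simpa using hh
      · rw [pr_cons_of_not _ _ hl, pr_append, pr_cons_of_not _ _ hl, ← pr_append] at hh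
        exact hh
    exact Teq.trans Γ (Teq.cons Γ l (ih (y ++ z) hmid))
      (Teq.symm Γ (Teq.shuffle Γ l y z hy))

/-- `pr` characterizes `Teq`. -/
lemma teq_iff_pr {w w' : List (Ltr V)} :
    Teq Γ w w' ↔ ∀ a b : V, ¬ Γ.Adj a b → pr a b w = pr a b w' :=
  ⟨fun h a b hab => pr_teq Γ h a b hab, fun h => teq_of_pr Γ w w' h⟩

/-- Left cancellation. -/
lemma teq_cancel {c : Ltr V} {u v : List (Ltr V)} (h : Teq Γ (c :: u) (c :: v)) :
    Teq Γ u v := by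
  rw [teq_iff_pr] at h ⊢
  intro a b hab
  have := h a b hab
  by_cases hc : c.1 = a ∨ c.1 = b
  · rw [pr_cons_of _ _ hc, pr_cons_of _ _ hc] at this
    exact List.tail_eq_of_cons_eq this
  · rwa [pr_cons_of_not _ _ hc, pr_cons_of_not _ _ hc] at this

/-- Head lemma. -/
lemma head_lemma {l : Ltr V} {w u : List (Ltr V)} (h : Teq Γ (l :: w) u) :
    ∃ y z, u = y ++ l :: z ∧ (∀ m ∈ y, com Γ m l) ∧ Teq Γ w (y ++ z) := by
  obtain ⟨y, z, rfl, hy⟩ := extract Γ l u (fun c hc =>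
    ⟨pr c l.1 w, by
      rw [← pr_teq Γ h c l.1 hc, pr_cons_of _ _ (Or.inr rfl)]⟩)
  refine ⟨y, z, rfl, hy, ?_⟩
  exact teq_cancel Γ (Teq.trans Γ h (Teq.shuffle Γ l y z hy))



variable {V : Type*} (Γ : SimpleGraph V)

/-- A word is reduced if it is not trace-equivalent to a word with an
adjacent cancelling pair. -/
def Reduced (w : List (Ltr V)) : Prop :=
  ¬ ∃ (x z : List (Ltr V)) (a : Ltr V), Teq Γ w (x ++ a :: linv a :: z)

lemma reduced_nil : Reduced Γ ([] : List (Ltr V)) := by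
  rintro ⟨x, z, a, h⟩
  have := h.length_eq Γ
  simp only [List.length_nil, List.length_append, List.length_cons] at this
  omega

lemma Reduced.teq {w u : List (Ltr V)} (h : Teq Γ w u) (hw : Reduced Γ w) :
    Reduced Γ u := by
  rintro ⟨x, z, a, h2⟩
  exact hw ⟨x, z, a, Teq.trans Γ h h2⟩

lemma Reduced.tail {l : Ltr V} {w : List (Ltr V)} (h : Reduced Γ (l :: w)) :
    Reduced Γ w := by
  rintro ⟨x, z, a, h2⟩
  exact h ⟨l :: x, z, a, by simpa using Teq.cons Γ l h2⟩

lemma Reduced.prefix {w z : List (Ltr V)} (h : Reduced Γ (w ++ z)) :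
    Reduced Γ w := by
  rintro ⟨x, t, a, h2⟩
  refine h ⟨x, t ++ z, a, ?_⟩
  have := h2.append_right Γ z
  simpa using this

/-- Splitting a list along a distinguished middle element. -/
lemma split_mid {α : Type*} : ∀ (y : List α) (l : α) (z x t : List α),
    y ++ l :: z = x ++ t →
    (∃ u, x = y ++ l :: u ∧ z = u ++ t) ∨ (∃ u, t = u ++ l :: z ∧ y = x ++ u) := by
  intro y
  induction y with
  | nil =>
    intro l z x t h
    cases x with
    | nil =>
      refine Or.inr ⟨[], ?_, rfl⟩
      simpa using h.symm
    | cons hx x' =>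
      simp only [List.nil_append, List.cons_append, List.cons.injEq] at h
      exact Or.inl ⟨x', by simp [h.1], h.2⟩
  | cons hy y' ih =>
    intro l z x t h
    cases x with
    | nil =>
      refine Or.inr ⟨hy :: y', ?_, by simp⟩
      simpa using h.symm
    | cons hx x' =>
      simp only [List.cons_append, List.cons.injEq] at h
      rcases ih l z x' t h.2 with ⟨u, h1, h2⟩ | ⟨u, h1, h2⟩
      · exact Or.inl ⟨u, by simp [h.1, h1], h2⟩
      · exact Or.inr ⟨u, h1, by simp [h.1, h2]⟩

lemma com_linv_right {m l : Ltr V} (h : com Γ m l) : com Γ m (linv l) := h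

/-- Key dichotomy: a letter prepended to a reduced word either cancels or extends. -/
lemma cons_dichotomy {w : List (Ltr V)} (hw : Reduced Γ w) (l : Ltr V) :
    (∃ w', Teq Γ w (linv l :: w')) ∨ Reduced Γ (l :: w) := by
  by_cases hr : Reduced Γ (l :: w)
  · exact Or.inr hr
  · left
    rw [Reduced] at hr
    push_neg at hr
    obtain ⟨x, z, a, hteq⟩ := hr
    obtain ⟨y, t, hdec, hy, hwt⟩ := head_lemma Γ hteq
    rcases split_mid y l t x (a :: linv a :: z) hdec.symm with ⟨u, h1, h2⟩ | ⟨u, h1, h2⟩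
    · exfalso
      refine hw ⟨y ++ u, z, a, ?_⟩
      rw [h2] at hwt
      simpa [List.append_assoc] using hwt
    · cases u with
      | nil =>
        simp only [List.nil_append, List.cons.injEq] at h1
        obtain ⟨hal, ht⟩ := h1
        refine ⟨y ++ z, ?_⟩
        rw [← ht] at hwt
        rw [← hal]
        refine Teq.trans Γ hwt ?_
        exact Teq.shuffle Γ (linv a) y z (fun m hm => by
          have := hy m hm
          rw [← hal] at this
          exact com_linv_right Γ this)
      | cons a1 u' =>
        cases u' with
        | nil =>
          simp only [List.cons_append, List.nil_append, List.cons.injEq] at h1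
          obtain ⟨ha1, hl, -⟩ := h1
          exfalso
          have hmem : a1 ∈ y := by simp [h2]
          have hcc := hy a1 hmem
          rw [← ha1, ← hl] at hcc
          exact Γ.irrefl hcc
        | cons a2 u'' =>
          exfalso
          simp only [List.cons_append, List.cons.injEq] at h1
          obtain ⟨ha1, ha2, -⟩ := h1
          refine hw ⟨x, u'' ++ t, a, ?_⟩
          rw [h2, ← ha1, ← ha2] at hwt
          simpa [List.append_assoc] using hwt



/-- The group element of a letter. -/
noncomputable def toG (l : Ltr V) : RAAG Γ :=
  cond l.2 (PresentedGroup.of l.1) (PresentedGroup.of l.1)⁻¹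

lemma toG_linv (l : Ltr V) : toG Γ (linv l) = (toG Γ l)⁻¹ := by
  cases l with
  | mk v b => cases b <;> simp [toG, linv]

open scoped commutatorElement in
lemma of_commute {u v : V} (h : Γ.Adj u v) :
    Commute (PresentedGroup.of u : RAAG Γ) (PresentedGroup.of v) := by
  rw [← commutatorElement_eq_one_iff_commute]
  have hmem : (⁅FreeGroup.of u, FreeGroup.of v⁆ : FreeGroup V) ∈ raagRels Γ :=
    ⟨u, v, h, rfl⟩
  have : (PresentedGroup.of u : RAAG Γ) = PresentedGroup.mk (raagRels Γ) (FreeGroup.of u) := rfl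
  rw [this]
  have : (PresentedGroup.of v : RAAG Γ) = PresentedGroup.mk (raagRels Γ) (FreeGroup.of v) := rfl
  rw [this]
  rw [← map_commutatorElement]
  exact (QuotientGroup.eq_one_iff _).mpr (Subgroup.subset_normalClosure hmem)

lemma com_commute {l m : Ltr V} (h : com Γ l m) :
    Commute (toG Γ l) (toG Γ m) := by
  have hbase : Commute (PresentedGroup.of l.1 : RAAG Γ) (PresentedGroup.of m.1) :=
    of_commute Γ h
  cases hb : l.2 <;> cases hb2 : m.2 <;>
    simp only [toG, hb, hb2, cond_true, cond_false]
  · exact (hbase.inv_left).inv_right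
  · exact hbase.inv_left
  · exact hbase.inv_right
  · exact hbase

/-- The group element represented by a word. -/
noncomputable def pig (w : List (Ltr V)) : RAAG Γ := (w.map (toG Γ)).prod

@[simp] lemma pig_nil : pig Γ ([] : List (Ltr V)) = 1 := rfl

@[simp] lemma pig_cons (l : Ltr V) (w : List (Ltr V)) :
    pig Γ (l :: w) = toG Γ l * pig Γ w := by simp [pig]

@[simp] lemma pig_append (w u : List (Ltr V)) :
    pig Γ (w ++ u) = pig Γ w * pig Γ u := by simp [pig]

lemma pig_teq {w u : List (Ltr V)} (h : Teq Γ w u) : pig Γ w = pig Γ u := by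
  induction h with
  | refl => rfl
  | tail _ hstep ih =>
    refine ih.trans ?_
    cases hstep with
    | mk x y a b hc =>
      simp only [pig_append, pig_cons, ← mul_assoc]
      have hca : pig Γ x * toG Γ a * toG Γ b = pig Γ x * toG Γ b * toG Γ a := by
        rw [mul_assoc, mul_assoc, (com_commute Γ hc).eq]
      rw [hca]

lemma pig_cancel_pair (x z : List (Ltr V)) (a : Ltr V) :
    pig Γ (x ++ a :: linv a :: z) = pig Γ (x ++ z) := by
  simp [toG_linv, ← mul_assoc]

/-- Reversal with inversion. -/
def wrev (w : List (Ltr V)) : List (Ltr V) := (w.map linv).reverse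

@[simp] lemma wrev_nil : wrev ([] : List (Ltr V)) = [] := rfl

lemma wrev_cons (l : Ltr V) (w : List (Ltr V)) :
    wrev (l :: w) = wrev w ++ [linv l] := by simp [wrev]

lemma wrev_append (w u : List (Ltr V)) :
    wrev (w ++ u) = wrev u ++ wrev w := by simp [wrev]

@[simp] lemma wrev_wrev (w : List (Ltr V)) : wrev (wrev w) = w := by
  simp [wrev, List.map_reverse, List.map_map, Function.comp_def]

lemma wrev_length (w : List (Ltr V)) : (wrev w).length = w.length := by simp [wrev]

lemma pig_wrev (w : List (Ltr V)) : pig Γ (wrev w) = (pig Γ w)⁻¹ := by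
  induction w with
  | nil => simp
  | cons l w ih => rw [wrev_cons]; simp [ih, toG_linv]

lemma wrev_swapstep {w u : List (Ltr V)} (h : SwapStep Γ w u) :
    SwapStep Γ (wrev w) (wrev u) := by
  cases h with
  | mk x y a b hc =>
    have e1 : wrev (x ++ a :: b :: y) = wrev y ++ (linv b) :: (linv a) :: wrev x := by
      simp [wrev_append, wrev_cons, List.append_assoc]
    have e2 : wrev (x ++ b :: a :: y) = wrev y ++ (linv a) :: (linv b) :: wrev x := by
      simp [wrev_append, wrev_cons, List.append_assoc]
    rw [e1, e2]
    exact SwapStep.mk _ _ _ _ (com_symm Γ hc)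

lemma wrev_teq {w u : List (Ltr V)} (h : Teq Γ w u) : Teq Γ (wrev w) (wrev u) := by
  induction h with
  | refl => exact Teq.refl Γ _
  | tail _ hstep ih => exact Teq.trans Γ ih (Teq.single Γ (wrev_swapstep Γ hstep))

lemma Reduced.wrev' {w : List (Ltr V)} (h : Reduced Γ w) : Reduced Γ (wrev w) := by
  rintro ⟨x, z, a, h2⟩
  have h3 := wrev_teq Γ h2
  rw [wrev_wrev] at h3
  refine h ⟨wrev z, wrev x, a, ?_⟩
  have heq : wrev (x ++ a :: linv a :: z) = wrev z ++ a :: linv a :: wrev x := by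
    simp [wrev_append, wrev_cons, List.append_assoc]
  rwa [heq] at h3

lemma reduced_wrev_iff {w : List (Ltr V)} : Reduced Γ (wrev w) ↔ Reduced Γ w :=
  ⟨fun h => by simpa using h.wrev' Γ, fun h => h.wrev' Γ⟩

/-- Every element is represented by some word. -/
lemma exists_word (g : RAAG Γ) : ∃ w : List (Ltr V), pig Γ w = g := by
  induction g using PresentedGroup.induction_on with
  | H z =>
    induction z using FreeGroup.induction_on with
    | C1 => exact ⟨[], by simp [pig]⟩
    | of v => exact ⟨[(v, true)], by simp [pig, toG]; rfl⟩
    | inv_of v ih =>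
      obtain ⟨w, hw⟩ := ih
      exact ⟨wrev w, by rw [pig_wrev, hw]; simp⟩
    | mul a b iha ihb =>
      obtain ⟨wa, hwa⟩ := iha
      obtain ⟨wb, hwb⟩ := ihb
      exact ⟨wa ++ wb, by rw [pig_append, hwa, hwb]; simp⟩

/-- Every element has a reduced representative. -/
lemma exists_reduced_rep (g : RAAG Γ) :
    ∃ w : List (Ltr V), Reduced Γ w ∧ pig Γ w = g := by
  obtain ⟨w, hw⟩ := exists_word Γ g
  subst hw
  suffices h : ∀ (n : ℕ) (w : List (Ltr V)), w.length ≤ n →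
      ∃ w₀, Reduced Γ w₀ ∧ pig Γ w₀ = pig Γ w ∧ w₀.length ≤ w.length by
    obtain ⟨w₀, h1, h2, -⟩ := h w.length w le_rfl
    exact ⟨w₀, h1, h2⟩
  intro n
  induction n with
  | zero =>
    intro w hw
    rw [Nat.le_zero, List.length_eq_zero_iff] at hw
    subst hw
    exact ⟨[], reduced_nil Γ, rfl, le_rfl⟩
  | succ n ih =>
    intro w hw
    by_cases hred : Reduced Γ w
    · exact ⟨w, hred, rfl, le_rfl⟩
    · rw [Reduced] at hred
      push_neg at hred
      obtain ⟨x, z, a, hteq⟩ := hred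
      have hlen := hteq.length_eq Γ
      simp only [List.length_append, List.length_cons] at hlen
      have hxz : (x ++ z).length ≤ n := by
        simp only [List.length_append]
        omega
      obtain ⟨w₀, h1, h2, h3⟩ := ih (x ++ z) hxz
      refine ⟨w₀, h1, ?_, ?_⟩
      · rw [h2, ← pig_cancel_pair Γ x z a, ← pig_teq Γ hteq]
      · simp only [List.length_append] at h3 ⊢
        omega


variable {V : Type*} (Γ : SimpleGraph V)

/-- Reduced words. -/
abbrev RW := {w : List (Ltr V) // Reduced Γ w}

/-- Trace equivalence as a setoid on reduced words. -/
def rsetoid : Setoid (RW Γ) :=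
  ⟨fun a b => Teq Γ a.1 b.1,
    ⟨fun a => Teq.refl Γ a.1, fun h => Teq.symm Γ h, fun h1 h2 => Teq.trans Γ h1 h2⟩⟩

/-- The space of reduced traces. -/
def R := Quotient (rsetoid Γ)

def qmk (w : RW Γ) : R Γ := Quotient.mk (rsetoid Γ) w

lemma qmk_eq_iff {w u : RW Γ} : qmk Γ w = qmk Γ u ↔ Teq Γ w.1 u.1 := by
  constructor
  · intro h; exact Quotient.exact h
  · intro h; exact Quotient.sound h

lemma cancel_red {w w' : List (Ltr V)} {l : Ltr V} (hw : Reduced Γ w)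
    (h : Teq Γ w (linv l :: w')) : Reduced Γ w' :=
  Reduced.tail Γ (hw.teq Γ h)

lemma no_cancel_red {w : List (Ltr V)} {l : Ltr V} (hw : Reduced Γ w)
    (h : ¬ ∃ w', Teq Γ w (linv l :: w')) : Reduced Γ (l :: w) := by
  rcases cons_dichotomy Γ hw l with h' | h'
  · exact absurd h' h
  · exact h'

lemma red_cons_no_cancel {w : List (Ltr V)} {l : Ltr V} (hw : Reduced Γ (l :: w)) :
    ¬ ∃ w', Teq Γ w (linv l :: w') := by
  rintro ⟨w', hw'⟩
  exact hw ⟨[], w', l, by simpa using Teq.cons Γ l hw'⟩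

open Classical in
/-- The action of a letter on a reduced word. -/
noncomputable def act0 (l : Ltr V) (w : RW Γ) : R Γ :=
  if h : ∃ w', Teq Γ w.1 (linv l :: w') then
    qmk Γ ⟨h.choose, cancel_red Γ w.2 h.choose_spec⟩
  else
    qmk Γ ⟨l :: w.1, no_cancel_red Γ w.2 h⟩

lemma act0_cancel {l : Ltr V} {w : RW Γ} {w' : List (Ltr V)}
    (h : Teq Γ w.1 (linv l :: w')) (hred : Reduced Γ w') :
    act0 Γ l w = qmk Γ ⟨w', hred⟩ := by
  have hex : ∃ w'', Teq Γ w.1 (linv l :: w'') := ⟨w', h⟩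
  rw [act0, dif_pos hex]
  rw [qmk_eq_iff]
  exact teq_cancel Γ (Teq.trans Γ (Teq.symm Γ hex.choose_spec) h)

lemma act0_cons {l : Ltr V} {w : RW Γ} (h : ¬ ∃ w', Teq Γ w.1 (linv l :: w')) :
    act0 Γ l w = qmk Γ ⟨l :: w.1, no_cancel_red Γ w.2 h⟩ := by
  rw [act0, dif_neg h]

/-- The action of a letter on reduced traces. -/
noncomputable def act (l : Ltr V) : R Γ → R Γ :=
  Quotient.lift (act0 Γ l) (by
    intro a b hab
    change Teq Γ a.1 b.1 at hab
    by_cases h : ∃ w', Teq Γ b.1 (linv l :: w')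
    · obtain ⟨w', hw'⟩ := h
      have hred : Reduced Γ w' := cancel_red Γ b.2 hw'
      rw [act0_cancel Γ hw' hred, act0_cancel Γ (Teq.trans Γ hab hw') hred]
    · have h2 : ¬ ∃ w', Teq Γ a.1 (linv l :: w') := by
        rintro ⟨w', hw'⟩
        exact h ⟨w', Teq.trans Γ (Teq.symm Γ hab) hw'⟩
      rw [act0_cons Γ h2, act0_cons Γ h, qmk_eq_iff]
      exact Teq.cons Γ l hab)

lemma act_cancel {l : Ltr V} {w : RW Γ} {w' : List (Ltr V)}
    (h : Teq Γ w.1 (linv l :: w')) (hred : Reduced Γ w') :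
    act Γ l (qmk Γ w) = qmk Γ ⟨w', hred⟩ := act0_cancel Γ h hred

lemma act_cons {l : Ltr V} {w : RW Γ} (h : ¬ ∃ w', Teq Γ w.1 (linv l :: w')) :
    act Γ l (qmk Γ w) = qmk Γ ⟨l :: w.1, no_cancel_red Γ w.2 h⟩ := act0_cons Γ h

lemma act_act_inv (l : Ltr V) (r : R Γ) : act Γ (linv l) (act Γ l r) = r := by
  induction r using Quotient.ind with
  | _ w =>
    show act Γ (linv l) (act Γ l (qmk Γ w)) = qmk Γ w
    by_cases h : ∃ w', Teq Γ w.1 (linv l :: w')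
    · obtain ⟨w', hw'⟩ := h
      have hred : Reduced Γ w' := cancel_red Γ w.2 hw'
      rw [act_cancel Γ hw' hred]
      have hno : ¬ ∃ z, Teq Γ w' (linv (linv l) :: z) := by
        rintro ⟨z, hz⟩
        rw [linv_linv] at hz
        refine w.2 ⟨[], z, linv l, ?_⟩
        simpa using Teq.trans Γ hw' (Teq.cons Γ (linv l) hz)
      rw [act_cons Γ hno, qmk_eq_iff]
      refine Teq.symm Γ ?_
      simpa [linv_linv] using hw'
    · rw [act_cons Γ h]
      have hy : Teq Γ (l :: w.1) (linv (linv l) :: w.1) := by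
        rw [linv_linv]
        exact Teq.refl Γ _
      rw [act_cancel Γ hy w.2]

/-- Two distinct letters which are both cancellable at the front of a reduced word. -/
lemma both_initial {w w₁ w₂ : List (Ltr V)} {a b : Ltr V} (hw : Reduced Γ w)
    (h1 : Teq Γ w (a :: w₁)) (h2 : Teq Γ w (b :: w₂)) (hab : a ≠ b) :
    com Γ b a ∧ ∃ w₃, Teq Γ w (a :: b :: w₃) := by
  obtain ⟨y, z, hdec, hy, hw1⟩ := head_lemma Γ (Teq.trans Γ (Teq.symm Γ h1) h2)
  -- hdec : b :: w₂ = y ++ a :: z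
  cases y with
  | nil =>
    exfalso
    simp only [List.nil_append, List.cons.injEq] at hdec
    exact hab hdec.1.symm
  | cons b' y' =>
    simp only [List.cons_append, List.cons.injEq] at hdec
    obtain ⟨hb, hw2⟩ := hdec
    have hcom : com Γ b a := by
      rw [hb]
      exact hy b' (List.mem_cons_self)
    refine ⟨hcom, y' ++ z, ?_⟩
    refine Teq.trans Γ h1 (Teq.cons Γ a ?_)
    have h5 : Teq Γ w₁ ((b' :: y') ++ z) := hw1
    rw [← hb] at h5
    exact h5

/-- Commutation of actions of commuting letters. -/
lemma act_comm_letters {p q : Ltr V} (hpq : Γ.Adj p.1 q.1) (r : R Γ) :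
    act Γ p (act Γ q r) = act Γ q (act Γ p r) := by
  -- mixed-case helper:
  have mixed : ∀ (p q : Ltr V), Γ.Adj p.1 q.1 → ∀ (w : RW Γ),
      (∃ w', Teq Γ w.1 (linv q :: w')) → (¬ ∃ u, Teq Γ w.1 (linv p :: u)) →
      act Γ p (act Γ q (qmk Γ w)) = act Γ q (act Γ p (qmk Γ w)) := by
    intro p q hpq w hq hp
    obtain ⟨w₁, hw₁⟩ := hq
    have hred1 : Reduced Γ w₁ := cancel_red Γ w.2 hw₁
    rw [act_cancel Γ hw₁ hred1]
    have hnp : ¬ ∃ u, Teq Γ w₁ (linv p :: u) := by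
      rintro ⟨u, hu⟩
      refine hp ⟨linv q :: u, ?_⟩
      refine Teq.trans Γ hw₁ (Teq.trans Γ (Teq.cons Γ (linv q) hu) ?_)
      exact Teq.single Γ (SwapStep.mk [] u (linv q) (linv p) (Γ.adj_symm hpq))
    rw [act_cons (w := ⟨w₁, hred1⟩) Γ hnp]
    rw [act_cons Γ hp]
    have hcan : Teq Γ (p :: w.1) (linv q :: p :: w₁) := by
      refine Teq.trans Γ (Teq.cons Γ p hw₁) ?_
      exact Teq.single Γ (SwapStep.mk [] w₁ p (linv q) hpq)
    have hredpw : Reduced Γ (p :: w₁) := no_cancel_red Γ hred1 hnp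
    rw [act_cancel Γ hcan hredpw]
  induction r using Quotient.ind with
  | _ w =>
    show act Γ p (act Γ q (qmk Γ w)) = act Γ q (act Γ p (qmk Γ w))
    by_cases hq : ∃ w', Teq Γ w.1 (linv q :: w') <;>
      by_cases hp : ∃ u, Teq Γ w.1 (linv p :: u)
    · -- both cancel
      obtain ⟨w₁, hw₁⟩ := hq
      obtain ⟨w₂, hw₂⟩ := hp
      have hne : linv q ≠ linv p := by
        intro h
        exact Γ.ne_of_adj hpq (congrArg Prod.fst h).symm
      obtain ⟨hcom, w₃, h3⟩ := both_initial Γ w.2 hw₁ hw₂ hne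
      -- h3 : Teq w (linv q :: linv p :: w₃)
      have hred3 : Reduced Γ (linv p :: w₃) := cancel_red Γ w.2 h3
      have hred3' : Reduced Γ w₃ := Reduced.tail Γ hred3
      have h3' : Teq Γ w.1 (linv p :: linv q :: w₃) :=
        Teq.trans Γ h3 (Teq.single Γ (SwapStep.mk [] w₃ (linv q) (linv p) (Γ.adj_symm hpq)))
      have hred3'' : Reduced Γ (linv q :: w₃) := cancel_red Γ w.2 h3'
      rw [act_cancel (l := q) Γ h3 hred3, act_cancel (l := p) Γ h3' hred3'']
      rw [act_cancel (l := p) (w := ⟨linv p :: w₃, hred3⟩) Γ (Teq.refl Γ _) hred3']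
      rw [act_cancel (l := q) (w := ⟨linv q :: w₃, hred3''⟩) Γ (Teq.refl Γ _) hred3']
    · exact mixed p q hpq w hq hp
    · exact (mixed q p (Γ.adj_symm hpq) w hp hq).symm
    · rw [act_cons Γ hq, act_cons Γ hp]
      have key : ∀ (p q : Ltr V), Γ.Adj p.1 q.1 →
          (¬ ∃ u, Teq Γ w.1 (linv p :: u)) →
          ¬ ∃ u, Teq Γ (q :: w.1) (linv p :: u) := by
        intro p q hpq hp
        rintro ⟨u, hu⟩
        obtain ⟨y, z, hdec, hy, hwz⟩ := head_lemma Γ hu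
        cases y with
        | nil =>
          simp only [List.nil_append, List.cons.injEq] at hdec
          have h6 : (linv p).1 = q.1 := congrArg Prod.fst hdec.1
          exact Γ.ne_of_adj hpq h6
        | cons c y' =>
          simp only [List.cons_append, List.cons.injEq] at hdec
          obtain ⟨hc, -⟩ := hdec
          rw [← hc] at hwz
          exact hp ⟨y' ++ z, hwz⟩
      have hnpq := key p q hpq hp
      have hnqp := key q p (Γ.adj_symm hpq) hq
      rw [act_cons (w := ⟨q :: w.1, no_cancel_red Γ w.2 hq⟩) Γ hnpq,
        act_cons (w := ⟨p :: w.1, no_cancel_red Γ w.2 hp⟩) Γ hnqp, qmk_eq_iff]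
      exact Teq.single Γ (SwapStep.mk [] w.1 p q hpq)

/-- The permutation of reduced traces induced by a letter. -/
noncomputable def fperm (l : Ltr V) : Equiv.Perm (R Γ) where
  toFun := act Γ l
  invFun := act Γ (linv l)
  left_inv := fun r => act_act_inv Γ l r
  right_inv := fun r => by
    have h := act_act_inv Γ (linv l) r
    rwa [linv_linv] at h

lemma fperm_inv (l : Ltr V) : (fperm Γ l)⁻¹ = fperm Γ (linv l) :=
  Equiv.ext (fun _ => rfl)

lemma fperm_rel : ∀ r ∈ raagRels Γ,
    FreeGroup.lift (fun v => fperm Γ (v, true)) r = 1 := by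
  rintro r ⟨u, v, hadj, rfl⟩
  rw [map_commutatorElement, FreeGroup.lift_apply_of, FreeGroup.lift_apply_of,
    commutatorElement_eq_one_iff_commute]
  refine Equiv.ext (fun x => ?_)
  rw [Equiv.Perm.mul_apply, Equiv.Perm.mul_apply]
  exact act_comm_letters Γ hadj x

/-- The action of the RAAG on reduced traces. -/
noncomputable def theta : RAAG Γ →* Equiv.Perm (R Γ) :=
  PresentedGroup.toGroup (fperm_rel Γ)

lemma theta_toG (l : Ltr V) : theta Γ (toG Γ l) = fperm Γ l := by
  cases l with
  | mk v b =>
    cases b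
    · show theta Γ (PresentedGroup.of v)⁻¹ = _
      rw [map_inv]
      have h1 : theta Γ (PresentedGroup.of v) = fperm Γ (v, true) :=
        PresentedGroup.toGroup.of (fperm_rel Γ)
      rw [h1, fperm_inv]
      rfl
    · exact PresentedGroup.toGroup.of (fperm_rel Γ)

/-- Evaluation of the action at the empty trace recovers the word. -/
lemma theta_pig {w : List (Ltr V)} (hred : Reduced Γ w) :
    theta Γ (pig Γ w) (qmk Γ ⟨[], reduced_nil Γ⟩) = qmk Γ ⟨w, hred⟩ := by
  induction w with
  | nil => rw [pig_nil, map_one]; rfl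
  | cons l w ih =>
    have hw : Reduced Γ w := hred.tail Γ
    rw [pig_cons, map_mul, Equiv.Perm.mul_apply, ih hw, theta_toG]
    show act Γ l (qmk Γ ⟨w, hw⟩) = _
    rw [act_cons Γ (red_cons_no_cancel Γ hred)]

/-- The normal form theorem: reduced words representing the same element
are trace equivalent. -/
theorem teq_of_pig_eq {w w' : List (Ltr V)} (h : Reduced Γ w) (h' : Reduced Γ w')
    (heq : pig Γ w = pig Γ w') : Teq Γ w w' := by
  have h2 := congrArg (fun g => theta Γ g (qmk Γ ⟨[], reduced_nil Γ⟩)) heq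
  rw [theta_pig Γ h, theta_pig Γ h'] at h2
  exact (qmk_eq_iff Γ).mp h2

/-- Exposed reduction lemma. -/
lemma exists_reduced_le (w : List (Ltr V)) :
    ∃ w₀, Reduced Γ w₀ ∧ pig Γ w₀ = pig Γ w ∧ w₀.length ≤ w.length := by
  suffices h : ∀ (n : ℕ) (w : List (Ltr V)), w.length ≤ n →
      ∃ w₀, Reduced Γ w₀ ∧ pig Γ w₀ = pig Γ w ∧ w₀.length ≤ w.length by
    exact h w.length w le_rfl
  intro n
  induction n with
  | zero =>
    intro w hw
    rw [Nat.le_zero, List.length_eq_zero_iff] at hw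
    subst hw
    exact ⟨[], reduced_nil Γ, rfl, le_rfl⟩
  | succ n ih =>
    intro w hw
    by_cases hred : Reduced Γ w
    · exact ⟨w, hred, rfl, le_rfl⟩
    · rw [Reduced] at hred
      push_neg at hred
      obtain ⟨x, z, a, hteq⟩ := hred
      have hlen := hteq.length_eq Γ
      simp only [List.length_append, List.length_cons] at hlen
      have hxz : (x ++ z).length ≤ n := by
        simp only [List.length_append]; omega
      obtain ⟨w₀, h1, h2, h3⟩ := ih (x ++ z) hxz
      refine ⟨w₀, h1, ?_, ?_⟩
      · rw [h2, ← pig_cancel_pair Γ x z a, ← pig_teq Γ hteq]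
      · simp only [List.length_append] at h3 ⊢; omega

section Fin
variable [Fintype V]

lemma toG_mem (l : Ltr V) : toG Γ l ∈ raagS Γ := by
  classical
  unfold raagS
  cases l with
  | mk v b =>
    cases b
    · exact Finset.mem_union_right _ (Finset.mem_image_of_mem _ (Finset.mem_univ v))
    · exact Finset.mem_union_left _ (Finset.mem_image_of_mem _ (Finset.mem_univ v))

lemma mem_raagS {a : RAAG Γ} (h : a ∈ raagS Γ) : ∃ l : Ltr V, toG Γ l = a := by
  classical
  unfold raagS at h
  rcases Finset.mem_union.mp h with h' | h' <;>
    obtain ⟨v, -, rfl⟩ := Finset.mem_image.mp h'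
  · exact ⟨(v, true), rfl⟩
  · exact ⟨(v, false), rfl⟩

/-- Lifting a word over the generating set to a letter word. -/
lemma list_lift : ∀ L : List (RAAG Γ), (∀ x ∈ L, x ∈ (raagS Γ : Set (RAAG Γ))) →
    ∃ w : List (Ltr V), pig Γ w = L.prod ∧ w.length = L.length := by
  intro L
  induction L with
  | nil => exact fun _ => ⟨[], by simp, rfl⟩
  | cons x L ih =>
    intro h
    obtain ⟨w, hw, hl⟩ := ih (fun y hy => h y (List.mem_cons_of_mem _ hy))
    obtain ⟨l, hl2⟩ := mem_raagS Γ (h x (List.mem_cons_self))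
    exact ⟨l :: w, by simp [hw, hl2], by simp [hl]⟩

lemma wl_le_of_word {g : RAAG Γ} (w : List (Ltr V)) (h : pig Γ w = g) :
    wl (raagS Γ : Set (RAAG Γ)) g ≤ w.length := by
  apply Nat.sInf_le
  refine ⟨w.map (toG Γ), ?_, by simp, by rw [← h]; rfl⟩
  intro x hx
  obtain ⟨l, -, rfl⟩ := List.mem_map.mp hx
  exact toG_mem Γ l

/-- The word length of an element is the length of any reduced representative. -/
lemma wl_pig_reduced {w : List (Ltr V)} (h : Reduced Γ w) :
    wl (raagS Γ : Set (RAAG Γ)) (pig Γ w) = w.length := by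
  refine le_antisymm (wl_le_of_word Γ w rfl) ?_
  apply le_csInf
  · exact ⟨w.length, w.map (toG Γ), fun x hx => by
      obtain ⟨l, -, rfl⟩ := List.mem_map.mp hx; exact toG_mem Γ l, by simp, rfl⟩
  · rintro k ⟨L, hmem, rfl, hprod⟩
    obtain ⟨w', hw', hlen⟩ := list_lift Γ L hmem
    obtain ⟨w₀, hred₀, hpig₀, hle₀⟩ := exists_reduced_le Γ w'
    have hteq : Teq Γ w w₀ :=
      teq_of_pig_eq Γ h hred₀ (by rw [hpig₀, hw', hprod])
    rw [hteq.length_eq Γ, ← hlen]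
    exact hle₀

lemma wl_pig_le_iff {w : List (Ltr V)} (h : Reduced Γ w) {g : RAAG Γ} (hg : pig Γ w = g) :
    wl (raagS Γ : Set (RAAG Γ)) g = w.length := by
  rw [← hg]; exact wl_pig_reduced Γ h

end Fin

lemma mul_left_cancel_word {w w' : List (Ltr V)} {l : Ltr V} (hred : Reduced Γ w)
    (h : Teq Γ w (linv l :: w')) :
    Reduced Γ w' ∧ pig Γ w' = toG Γ l * pig Γ w := by
  refine ⟨cancel_red Γ hred h, ?_⟩
  rw [pig_teq Γ h, pig_cons, toG_linv, ← mul_assoc, mul_inv_cancel, one_mul]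

lemma right_dichotomy {w : List (Ltr V)} (hred : Reduced Γ w) (l : Ltr V) :
    (∃ z, Teq Γ w (z ++ [linv l])) ∨ Reduced Γ (w ++ [l]) := by
  rcases cons_dichotomy Γ (hred.wrev' Γ) (linv l) with ⟨u, hu⟩ | h
  · left
    rw [linv_linv] at hu
    refine ⟨wrev u, ?_⟩
    have h2 := wrev_teq Γ hu
    rw [wrev_wrev, wrev_cons] at h2
    exact h2
  · right
    rw [← reduced_wrev_iff]
    have : wrev (w ++ [l]) = linv l :: wrev w := by
      rw [wrev_append]; rfl
    rw [this]
    exact h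

lemma mul_right_cancel_word {w z : List (Ltr V)} {l : Ltr V} (hred : Reduced Γ w)
    (h : Teq Γ w (z ++ [linv l])) :
    Reduced Γ z ∧ pig Γ z = pig Γ w * toG Γ l := by
  constructor
  · exact Reduced.prefix Γ (hred.teq Γ h)
  · rw [pig_teq Γ h, pig_append]
    simp [toG_linv]

lemma pr_nil' (a b : V) : pr a b ([] : List (Ltr V)) = [] := rfl

lemma pr_single (a b : V) {l : Ltr V} (h : l.1 = a ∨ l.1 = b) :
    pr a b [l] = [l] := by
  rw [pr_cons_of a b h]
  rfl

section Fin
variable [Fintype V]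

/-- Core computation: if conjugation by `t` shortens, it shortens by exactly 2 and
the opposite conjugation lengthens by exactly 2. -/
lemma conj_low {w : List (Ltr V)} (hred : Reduced Γ w) (t : Ltr V)
    (h : wl (raagS Γ : Set (RAAG Γ)) (toG Γ (linv t) * pig Γ w * toG Γ t) + 1 ≤ w.length) :
    wl (raagS Γ : Set (RAAG Γ)) (toG Γ t * pig Γ w * toG Γ (linv t)) = w.length + 2 ∧
    wl (raagS Γ : Set (RAAG Γ)) (toG Γ (linv t) * pig Γ w * toG Γ t) + 2 = w.length := by
  -- Step 1: the left multiplication by `linv t` must cancel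
  have hc1 : ∃ w', Teq Γ w (t :: w') := by
    by_contra hno
    have hno' : ¬ ∃ w', Teq Γ w (linv (linv t) :: w') := by
      simpa [linv_linv] using hno
    have hred1 : Reduced Γ (linv t :: w) := no_cancel_red Γ hred hno'
    have hpig1 : pig Γ (linv t :: w) = toG Γ (linv t) * pig Γ w := pig_cons Γ _ _
    rcases right_dichotomy Γ hred1 t with ⟨z, hz⟩ | hr
    · obtain ⟨hzred, hzpig⟩ := mul_right_cancel_word Γ hred1 hz
      have hwl : wl (raagS Γ : Set (RAAG Γ)) (toG Γ (linv t) * pig Γ w * toG Γ t) = z.length := by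
        rw [← hpig1, ← hzpig]; exact (wl_pig_reduced Γ hzred).symm ▸ rfl
      have hlz := hz.length_eq Γ
      simp only [List.length_cons, List.length_append, List.length_cons,
        List.length_nil] at hlz
      omega
    · have hwl : wl (raagS Γ : Set (RAAG Γ)) (toG Γ (linv t) * pig Γ w * toG Γ t)
          = w.length + 2 := by
        have hp : pig Γ ((linv t :: w) ++ [t]) = toG Γ (linv t) * pig Γ w * toG Γ t := by
          rw [pig_append, hpig1]; simp [pig]
        rw [← hp, wl_pig_reduced Γ hr]
        simp
      omega
  obtain ⟨w', hw'⟩ := hc1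
  have hw'c : Teq Γ w (linv (linv t) :: w') := by rwa [linv_linv]
  obtain ⟨hw'red, hw'pig⟩ := mul_left_cancel_word Γ hred hw'c
  have hlw' : w.length = w'.length + 1 := by
    have := hw'.length_eq Γ; simpa using this
  -- Step 2: right multiplication of w' by t must cancel
  have hc2 : ∃ z, Teq Γ w' (z ++ [linv t]) := by
    by_contra hno
    rcases right_dichotomy Γ hw'red t with hz | hr
    · exact hno hz
    · have hp : pig Γ (w' ++ [t]) = toG Γ (linv t) * pig Γ w * toG Γ t := by
        rw [pig_append, hw'pig, toG_linv]; simp [pig]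
      have hwl := wl_pig_reduced Γ hr
      rw [hp] at hwl
      simp only [List.length_append, List.length_cons, List.length_nil] at hwl
      omega
  obtain ⟨z, hz⟩ := hc2
  obtain ⟨hzred, hzpig⟩ := mul_right_cancel_word Γ hw'red hz
  have hzpig' : pig Γ z = toG Γ (linv t) * pig Γ w * toG Γ t := by
    rw [hzpig, hw'pig, toG_linv]
  have hlz : w'.length = z.length + 1 := by
    have := hz.length_eq Γ; simpa using this
  have hwlz : wl (raagS Γ : Set (RAAG Γ)) (toG Γ (linv t) * pig Γ w * toG Γ t) = z.length := by
    rw [← hzpig']; exact wl_pig_reduced Γ hzred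
  -- the canonical form of w
  have hW : Teq Γ w (t :: (z ++ [linv t])) :=
    Teq.trans Γ hw' (Teq.cons Γ t hz)
  set v := t.1 with hv
  have hprW : pr v v w = t :: (pr v v z ++ [linv t]) := by
    rw [pr_teq Γ hW v v (Γ.irrefl)]
    rw [pr_cons_of (l := t) v v (Or.inl rfl), pr_append,
      pr_single v v (Or.inl (by rfl : (linv t).1 = v))]
  -- Step 3: left multiplication by t does not cancel
  have hnc3 : ¬ ∃ w₂, Teq Γ w (linv t :: w₂) := by
    rintro ⟨w₂, hw₂⟩
    have hpp := pr_teq Γ hw₂ v v (Γ.irrefl)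
    rw [hprW, pr_cons_of (l := linv t) v v (Or.inl (by rfl : (linv t).1 = v))] at hpp
    exact linv_ne t (List.head_eq_of_cons_eq hpp.symm)
  have hred3 : Reduced Γ (t :: w) := no_cancel_red Γ hred hnc3
  -- Step 4: right multiplication of (t :: w) by (linv t) does not cancel
  have hnc4 : ¬ ∃ z', Teq Γ (t :: w) (z' ++ [linv (linv t)]) := by
    rintro ⟨z', hz'⟩
    rw [linv_linv] at hz'
    have hpr := pr_teq Γ hz' v v (Γ.irrefl)
    rw [pr_cons_of (l := t) v v (Or.inl rfl), hprW, pr_append,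
      pr_single v v (Or.inl (rfl : t.1 = v))] at hpr
    have hlast := congrArg List.getLast? hpr
    rw [show t :: t :: (pr v v z ++ [linv t]) = (t :: t :: pr v v z) ++ [linv t] by
      simp] at hlast
    rw [List.getLast?_concat, List.getLast?_concat] at hlast
    exact linv_ne t (Option.some.inj hlast)
  rcases right_dichotomy Γ hred3 (linv t) with hz' | hr4
  · exact absurd hz' hnc4
  · have hp4 : pig Γ ((t :: w) ++ [linv t]) = toG Γ t * pig Γ w * toG Γ (linv t) := by
      rw [pig_append, pig_cons]; simp [pig]
    have hwl4 := wl_pig_reduced Γ hr4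
    rw [hp4] at hwl4
    simp only [List.length_append, List.length_cons, List.length_nil] at hwl4
    constructor
    · omega
    · omega

/-- Lemma A: conjugating both ways cannot shorten on average. -/
lemma lemA {w : List (Ltr V)} (hred : Reduced Γ w) (t : Ltr V) :
    2 * w.length ≤ wl (raagS Γ : Set (RAAG Γ)) (toG Γ (linv t) * pig Γ w * toG Γ t)
      + wl (raagS Γ : Set (RAAG Γ)) (toG Γ t * pig Γ w * toG Γ (linv t)) := by
  set A := wl (raagS Γ : Set (RAAG Γ)) (toG Γ (linv t) * pig Γ w * toG Γ t) with hA
  set B := wl (raagS Γ : Set (RAAG Γ)) (toG Γ t * pig Γ w * toG Γ (linv t)) with hB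
  by_cases h1 : A + 1 ≤ w.length
  · obtain ⟨e1, e2⟩ := conj_low Γ hred t h1
    omega
  · by_cases h2 : B + 1 ≤ w.length
    · have h2' : wl (raagS Γ : Set (RAAG Γ))
          (toG Γ (linv (linv t)) * pig Γ w * toG Γ (linv t)) + 1 ≤ w.length := by
        rwa [linv_linv]
      obtain ⟨e1, e2⟩ := conj_low Γ hred (linv t) h2'
      rw [linv_linv] at e1 e2
      omega
    · omega

end Fin

lemma ends_with {α : Type*} {c0 c1 : α} {P Z : List α} (H : c0 :: P = Z ++ [c1]) :
    (P = [] ∧ c0 = c1) ∨ P.reverse.head? = some c1 := by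
  have H2 := congrArg List.reverse H
  simp only [List.reverse_cons, List.reverse_append, List.reverse_singleton,
    List.singleton_append] at H2
  cases hP : P.reverse with
  | nil =>
    left
    refine ⟨by simpa using congrArg List.reverse hP, ?_⟩
    rw [hP, List.nil_append] at H2
    exact List.head_eq_of_cons_eq H2
  | cons c P₂ =>
    right
    rw [hP] at H2
    rw [List.cons_append] at H2
    rw [List.head_eq_of_cons_eq H2]
    rfl

section Fin
variable [Fintype V]

/-- If a letter does not cancel on the left, the conjugate has length `n+2`
unless the corresponding right multiplication cancels. -/
lemma conj_no_init {w : List (Ltr V)} (hred : Reduced Γ w) (l : Ltr V)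
    (hnc : ¬ ∃ w₂, Teq Γ w (linv l :: w₂)) :
    wl (raagS Γ : Set (RAAG Γ)) (toG Γ l * pig Γ w * toG Γ (linv l)) = w.length + 2 ∨
    (wl (raagS Γ : Set (RAAG Γ)) (toG Γ l * pig Γ w * toG Γ (linv l)) = w.length ∧
      ∃ z, Teq Γ (l :: w) (z ++ [l])) := by
  have hred1 : Reduced Γ (l :: w) := no_cancel_red Γ hred hnc
  rcases right_dichotomy Γ hred1 (linv l) with ⟨z, hz⟩ | hr
  · right
    rw [linv_linv] at hz
    obtain ⟨hzred, hzpig⟩ := mul_right_cancel_word Γ hred1 (by rwa [linv_linv])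
    have hp : pig Γ z = toG Γ l * pig Γ w * toG Γ (linv l) := by
      rw [hzpig, pig_cons]
    have hlen := hz.length_eq Γ
    simp only [List.length_cons, List.length_append, List.length_nil] at hlen
    refine ⟨?_, z, hz⟩
    rw [← hp, wl_pig_reduced Γ hzred]
    omega
  · left
    have hp : pig Γ ((l :: w) ++ [linv l]) = toG Γ l * pig Γ w * toG Γ (linv l) := by
      rw [pig_append, pig_cons]; simp [pig]
    rw [← hp, wl_pig_reduced Γ hr]
    simp

end Fin

/-- Uniform projection consequence of a right-cancellation. -/
lemma c_head {w : List (Ltr V)} {v : V} {b : Bool} {z : List (Ltr V)}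
    (h : Teq Γ ((v, b) :: w) (z ++ [(v, b)])) (u : V) (hadj : ¬ Γ.Adj u v) :
    (pr u v w = [] ∧ True) ∨ (pr u v w).reverse.head? = some (v, b) := by
  have hpr := pr_teq Γ h u v hadj
  rw [pr_cons_of (l := (v,b)) u v (Or.inr rfl), pr_append,
    pr_single u v (Or.inr (rfl : ((v,b) : Ltr V).1 = v))] at hpr
  rcases ends_with hpr with ⟨h1, h2⟩ | h1
  · exact Or.inl ⟨h1, trivial⟩
  · exact Or.inr h1

lemma no_v_of_pr_nil {w : List (Ltr V)} {v : V} (h : pr v v w = []) :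
    ∀ x ∈ w, x.1 ≠ v := by
  intro x hx
  have := List.filter_eq_nil_iff.mp h x hx
  simp only [decide_eq_true_eq] at this
  tauto

lemma mem_pr_self {w : List (Ltr V)} {m : Ltr V} (hm : m ∈ w) (v : V) :
    m ∈ pr m.1 v w :=
  List.mem_filter.mpr ⟨hm, by simp⟩

lemma mem_of_pr {w : List (Ltr V)} {u v : V} {c : Ltr V} (hc : c ∈ pr u v w) :
    c ∈ w ∧ (c.1 = u ∨ c.1 = v) := by
  have := List.mem_filter.mp hc
  simpa using this

section Fin
variable [Fintype V]

/-- Lemma B, case 1: a good vertex gives a strictly increasing conjugation pair. -/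
lemma lemB_case1 {w : List (Ltr V)} (hred : Reduced Γ w) (v : V)
    (hInit : ∀ (b : Bool) w', ¬ Teq Γ w ((v, b) :: w'))
    (m : Ltr V) (hm : m ∈ w) (hmv : m.1 ≠ v) (hmadj : ¬ Γ.Adj m.1 v) :
    2 * w.length + 1 ≤
      wl (raagS Γ : Set (RAAG Γ)) (toG Γ (linv ((v, true) : Ltr V)) * pig Γ w * toG Γ ((v, true) : Ltr V))
      + wl (raagS Γ : Set (RAAG Γ)) (toG Γ ((v, true) : Ltr V) * pig Γ w * toG Γ (linv ((v, true) : Ltr V))) := by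
  have hnc : ∀ b : Bool, ¬ ∃ w₂, Teq Γ w (linv ((v, b) : Ltr V) :: w₂) := by
    rintro b ⟨w₂, hw₂⟩
    exact hInit (!b) w₂ hw₂
  have hfalse := conj_no_init Γ hred ((v, false) : Ltr V) (hnc false)
  have htrue := conj_no_init Γ hred ((v, true) : Ltr V) (hnc true)
  have hlf : (linv ((v, true) : Ltr V)) = ((v, false) : Ltr V) := rfl
  have hlt : (linv ((v, false) : Ltr V)) = ((v, true) : Ltr V) := rfl
  rw [hlf]
  rw [hlt] at hfalse
  rw [hlf] at htrue
  -- if both cancel we get a contradiction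
  have hnotboth : ¬ ((∃ z, Teq Γ (((v, false) : Ltr V) :: w) (z ++ [((v, false) : Ltr V)])) ∧
      (∃ z, Teq Γ (((v, true) : Ltr V) :: w) (z ++ [((v, true) : Ltr V)]))) := by
    rintro ⟨⟨z1, hz1⟩, ⟨z2, hz2⟩⟩
    by_cases hL : pr v v w = []
    · -- use the non-commuting letter m
      rcases c_head Γ hz2 m.1 hmadj with ⟨hM, -⟩ | hM
      · exact absurd hM (List.ne_nil_of_mem (mem_pr_self hm v))
      · cases hMr : (pr m.1 v w).reverse with
        | nil => rw [hMr] at hM; simp at hM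
        | cons c M₂ =>
          rw [hMr] at hM
          have hcv : c = ((v, true) : Ltr V) := by
            simpa using hM
          have hcmem : c ∈ pr m.1 v w := by
            rw [← List.mem_reverse, hMr]; exact List.mem_cons_self
          have := (mem_of_pr hcmem).1
          exact no_v_of_pr_nil hL c this (by rw [hcv])
    · rcases c_head Γ hz1 v (Γ.irrefl) with ⟨h1, -⟩ | h1
      · exact hL h1
      rcases c_head Γ hz2 v (Γ.irrefl) with ⟨h2, -⟩ | h2
      · exact hL h2
      rw [h1] at h2
      exact Bool.noConfusion (congrArg Prod.snd (Option.some.inj h2))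
  rcases hfalse with h1 | ⟨h1, hC1⟩ <;> rcases htrue with h2 | ⟨h2, hC2⟩
  · omega
  · omega
  · omega
  · exact absurd ⟨hC1, hC2⟩ hnotboth

/-- An element whose reduced word letters all commute with all generators they
meet is central. -/
lemma central_of_allcom {w : List (Ltr V)}
    (h : ∀ v : V, ∀ m ∈ w, m.1 = v ∨ Γ.Adj m.1 v) :
    pig Γ w ∈ Subgroup.center (RAAG Γ) := by
  rw [Subgroup.mem_center_iff]
  intro gg
  have hgen : ∀ v : V, Commute (PresentedGroup.of v : RAAG Γ) (pig Γ w) := by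
    intro v
    show Commute (PresentedGroup.of v : RAAG Γ) ((w.map (toG Γ)).prod)
    refine Commute.list_prod_right _ _ ?_
    intro y hy
    obtain ⟨mᵢ, hmem, rfl⟩ := List.mem_map.mp hy
    have hcom : Commute (PresentedGroup.of v : RAAG Γ) (PresentedGroup.of mᵢ.1) := by
      rcases h v mᵢ hmem with h' | h'
      · rw [h']
      · exact (of_commute Γ h').symm
    cases hb : mᵢ.2 <;> simp only [toG, hb, cond_true, cond_false]
    · exact hcom.inv_right
    · exact hcom
  have : ∀ gg : RAAG Γ, Commute gg (pig Γ w) := by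
    intro gg
    have hmem : gg ∈ Subgroup.closure (Set.range (PresentedGroup.of : V → RAAG Γ)) := by
      rw [PresentedGroup.closure_range_of]
      trivial
    induction hmem using Subgroup.closure_induction with
    | mem x hx => obtain ⟨v, rfl⟩ := hx; exact hgen v
    | one => exact Commute.one_left _
    | mul x y hx hy ihx ihy => exact ihx.mul_left ihy
    | inv x hx ih => exact ih.inv_left
  exact (this gg).eq

/-- Lemma B: for a non-central element there is a strictly increasing generator. -/
lemma lemB {w : List (Ltr V)} (hred : Reduced Γ w)
    (hnc : pig Γ w ∉ Subgroup.center (RAAG Γ)) :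
    ∃ t : Ltr V, 2 * w.length + 1 ≤
      wl (raagS Γ : Set (RAAG Γ)) (toG Γ (linv t) * pig Γ w * toG Γ t)
      + wl (raagS Γ : Set (RAAG Γ)) (toG Γ t * pig Γ w * toG Γ (linv t)) := by
  by_cases hcase : ∃ v : V, (∀ (b : Bool) w', ¬ Teq Γ w ((v, b) :: w')) ∧
      ∃ m ∈ w, m.1 ≠ v ∧ ¬ Γ.Adj m.1 v
  · obtain ⟨v, hInit, m, hm, hmv, hmadj⟩ := hcase
    exact ⟨((v, true) : Ltr V), lemB_case1 Γ hred v hInit m hm hmv hmadj⟩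
  · exfalso
    push_neg at hcase
    refine hnc (central_of_allcom Γ ?_)
    intro v m hm
    by_contra hcon
    push_neg at hcon
    obtain ⟨hmv, hmadj⟩ := hcon
    have hInitv : ∃ (b : Bool) (w' : List (Ltr V)), Teq Γ w ((v, b) :: w') := by
      by_contra hno
      push_neg at hno
      exact hmadj (hcase v (fun b w' => hno b w') m hm hmv)
    obtain ⟨bv, wv, hv⟩ := hInitv
    have hvmem : ((v, bv) : Ltr V) ∈ w := by
      have hpr := pr_teq Γ hv v v (Γ.irrefl)
      rw [pr_cons_of (l := ((v, bv) : Ltr V)) v v (Or.inl rfl)] at hpr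
      have hmm : ((v, bv) : Ltr V) ∈ pr v v w := by
        rw [hpr]; exact List.mem_cons_self
      exact (mem_of_pr hmm).1
    have hInitu : ∃ (b : Bool) (w' : List (Ltr V)), Teq Γ w ((m.1, b) :: w') := by
      by_contra hno
      push_neg at hno
      have hall := hcase m.1 (fun b w' => hno b w') ((v, bv) : Ltr V) hvmem
      exact hmadj (Γ.adj_symm (hall (fun hh => hmv hh.symm)))
    obtain ⟨bu, wu, hu⟩ := hInitu
    have hne : ((v, bv) : Ltr V) ≠ ((m.1, bu) : Ltr V) := by
      intro hh
      exact hmv (congrArg Prod.fst hh).symm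
    obtain ⟨hcom, -⟩ := both_initial Γ hred hv hu hne
    exact hmadj hcom
end Fin
end RaagNF
theorem stmt10 {V : Type*} [Fintype V] (Γ : SimpleGraph V) (g : RAAG Γ)
    (hg : g ≠ 1) :
    (g ∈ Subgroup.center (RAAG Γ) → curv (raagS Γ) g = 0) ∧
      (g ∉ Subgroup.center (RAAG Γ) → curv (raagS Γ) g < 0) := by
  classical
  obtain ⟨w, hred, hpig⟩ := RaagNF.exists_reduced_rep Γ g
  have hwne : w ≠ [] := by
    rintro rfl
    refine hg ?_
    rw [← hpig]
    exact RaagNF.pig_nil Γ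
  set n := w.length with hn
  have hnpos : 0 < n := List.length_pos_iff.mpr hwne
  have hwl : wl (↑(raagS Γ)) g = n := by
    rw [← hpig]; exact RaagNF.wl_pig_reduced Γ hred
  obtain ⟨l0, hl0⟩ := List.exists_mem_of_ne_nil w hwne
  have hcard : 0 < (raagS Γ).card :=
    Finset.card_pos.mpr ⟨RaagNF.toG Γ l0, RaagNF.toG_mem Γ l0⟩
  have hinvmem : ∀ a ∈ raagS Γ, a⁻¹ ∈ raagS Γ := by
    intro a ha
    obtain ⟨l, rfl⟩ := RaagNF.mem_raagS Γ ha
    rw [← RaagNF.toG_linv]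
    exact RaagNF.toG_mem Γ (RaagNF.linv l)
  constructor
  · intro hcen
    have hconj : ∀ a ∈ raagS Γ, a⁻¹ * g * a = g := by
      intro a _
      rw [mul_assoc, ← Subgroup.mem_center_iff.mp hcen a, ← mul_assoc,
        inv_mul_cancel, one_mul]
    have havg : Av (raagS Γ) g = ((wl (↑(raagS Γ)) g : ℝ)) := by
      rw [Av]
      rw [Finset.sum_congr rfl (fun a ha => by rw [hconj a ha])]
      rw [Finset.sum_const, nsmul_eq_mul]
      exact mul_div_cancel_left₀ _ (Nat.cast_ne_zero.mpr hcard.ne')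
    rw [curv, havg, sub_self, zero_div]
  · intro hcen
    have hncpig : RaagNF.pig Γ w ∉ Subgroup.center (RAAG Γ) := by
      rw [hpig]; exact hcen
    obtain ⟨t, hstrict⟩ := RaagNF.lemB Γ hred hncpig
    set F : RAAG Γ → ℕ := fun a => wl (↑(raagS Γ)) (a⁻¹ * g * a) with hF
    have hFa : ∀ l : RaagNF.Ltr V,
        F (RaagNF.toG Γ l) = wl (↑(raagS Γ))
          (RaagNF.toG Γ (RaagNF.linv l) * RaagNF.pig Γ w * RaagNF.toG Γ l) := by
      intro l
      simp only [hF]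
      rw [RaagNF.toG_linv, hpig]
    have hFainv : ∀ l : RaagNF.Ltr V,
        F ((RaagNF.toG Γ l)⁻¹) = wl (↑(raagS Γ))
          (RaagNF.toG Γ l * RaagNF.pig Γ w * RaagNF.toG Γ (RaagNF.linv l)) := by
      intro l
      simp only [hF]
      rw [inv_inv, RaagNF.toG_linv, hpig]
    have hbound : ∀ a ∈ raagS Γ, 2 * n ≤ F a + F a⁻¹ := by
      intro a ha
      obtain ⟨l, rfl⟩ := RaagNF.mem_raagS Γ ha
      rw [hFa l, hFainv l]
      exact RaagNF.lemA Γ hred l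
    have hstrict' : 2 * n < F (RaagNF.toG Γ t) + (F (RaagNF.toG Γ t)⁻¹) := by
      rw [hFa t, hFainv t]
      omega
    have hkey : (raagS Γ).card * n < ∑ a ∈ raagS Γ, F a := by
      have hlt : ∑ _a ∈ raagS Γ, 2 * n < ∑ a ∈ raagS Γ, (F a + F a⁻¹) :=
        Finset.sum_lt_sum hbound ⟨RaagNF.toG Γ t, RaagNF.toG_mem Γ t, hstrict'⟩
      rw [Finset.sum_const, smul_eq_mul, Finset.sum_add_distrib] at hlt
      have hinv : ∑ a ∈ raagS Γ, F a⁻¹ = ∑ a ∈ raagS Γ, F a :=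
        Finset.sum_nbij' (fun a => a⁻¹) (fun a => a⁻¹) (fun a ha => hinvmem a ha)
          (fun a ha => hinvmem a ha) (fun a _ => inv_inv a) (fun a _ => inv_inv a)
          (fun a _ => rfl)
      rw [hinv] at hlt
      have h2 : 2 * ((raagS Γ).card * n) < 2 * ∑ a ∈ raagS Γ, F a := by
        calc 2 * ((raagS Γ).card * n) = (raagS Γ).card * (2 * n) := by ring
        _ < ∑ a ∈ raagS Γ, F a + ∑ a ∈ raagS Γ, F a := hlt
        _ = 2 * ∑ a ∈ raagS Γ, F a := (two_mul _).symm
      exact Nat.lt_of_mul_lt_mul_left h2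
    have hAv : (n : ℝ) < Av (raagS Γ) g := by
      rw [Av, lt_div_iff₀ (by exact_mod_cast hcard : (0:ℝ) < ((raagS Γ).card : ℝ))]
      calc (n:ℝ) * ((raagS Γ).card : ℝ)
          = (((raagS Γ).card * n : ℕ) : ℝ) := by push_cast; ring
        _ < ((∑ a ∈ raagS Γ, F a : ℕ) : ℝ) := by exact_mod_cast hkey
        _ = ∑ a ∈ raagS Γ, (wl (↑(raagS Γ)) (a⁻¹ * g * a) : ℝ) := by
            rw [Nat.cast_sum]
    rw [curv]
    apply div_neg_of_neg_of_pos
    · rw [hwl]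
      linarith [hAv]
    · rw [hwl]
      exact_mod_cast hnpos
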